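/- For all ε ∈ (0,1], positive integers n and K_max with εK_max > 1 and 4K_max ≤ 2^n, there exists a function f : [2^n] × [D] → [4K_max] with D = ⌈3n/ε⌉ such that for every set X ⊆ [2^n] with |X| ≤ K_max and every set Y ⊆ [4K_max] with |Y| = ⌈ε|X|⌉, the fraction of pairs (x,i) ∈ X × [D] with f(x,i) ∈ Y is at most ε. Consequently x ↦ f(x, U_{[D]}) is a (K_max, ε)-conductor using at most log(4n/ε) random bits. -/

import Mathlib

open Finset Real
set_option maxHeartbeats 1000000

lemma numeric_core (ε k m n D w l2 lM lθ lE : ℝ)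
    (hl2 : 0.6931471803 < l2) (hε0 : 0 < ε) (hε1 : ε ≤ 1)
    (hk1 : 1 ≤ k) (hm1 : 1 ≤ m) (hmk : m ≤ k)
    (hn7 : 7 ≤ n) (hD0 : 0 < D) (h3n : 3 * n ≤ ε * D)
    (hw : 21 ≤ w) (hs : m / w ≤ 22 / 21)
    (hlM : lM ≤ n * l2) (hlM0 : 0 ≤ lM)
    (hlθ : l2 * 2 - (m / w - 1) ≤ lθ)
    (hlE : lE ≤ ε - ε * (m / w) / 4) :
    k * (n * l2) + m * lM + (k * D) * (lM + lE)
      ≤ (k + 1) * (-l2) + (ε * (k * D)) * lθ + (k * D) * lM := by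
  set s := m / w with hsdef
  set X := ε * (k * D) with hXdef
  have hw0 : (0:ℝ) < w := by linarith
  have hs0 : 0 ≤ s := by rw [hsdef]; positivity
  have hkD0 : (0:ℝ) < k * D := by positivity
  have hX0 : 0 < X := by rw [hXdef]; positivity
  have hX3nk : 3 * (n * k) ≤ X := by
    rw [hXdef]
    have := mul_le_mul_of_nonneg_right h3n (by linarith : (0:ℝ) ≤ k)
    nlinarith [this]
  -- step 1: m * lM ≤ m * (n * l2)
  have st1 : m * lM ≤ m * (n * l2) := mul_le_mul_of_nonneg_left hlM (by linarith)
  -- step 2: (k*D)*lE ≤ X - X * (s/4)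
  have st2 : (k * D) * lE ≤ X - X * (s / 4) := by
    have h := mul_le_mul_of_nonneg_left hlE (le_of_lt hkD0)
    have e : (k*D) * (ε - ε * (s / 4)) = X - X * (s/4) := by rw [hXdef]; ring
    have e2 : (k*D) * (ε - ε * s / 4) = (k*D) * (ε - ε * (s/4)) := by ring
    linarith [e ▸ (e2 ▸ h)]
  -- step 3: the core counting inequality
  have st3 : k * (n * l2) + m * (n * l2) + (k + 1) * l2 ≤ X * (l2 * 2 - s + s / 4) := by
    have c0 : 0 < l2 := by linarith
    have hnk0 : (0:ℝ) ≤ n * k := by positivity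
    have c1 : k * n + m * n + (k + 1) ≤ (16/7) * (n * k) := by
      nlinarith [mul_nonneg (by linarith : (0:ℝ) ≤ n - 7) (by linarith : (0:ℝ) ≤ k),
        mul_nonneg (by linarith : (0:ℝ) ≤ k - m) (by linarith : (0:ℝ) ≤ n)]
    have c2 : l2 * 2 - s + s/4 ≥ l2 * 2 - 11/14 := by linarith
    have c3 : 0 < l2 * 2 - 11/14 := by linarith
    have c4 : (16/7) * (n * k) * l2 ≤ 3 * (n * k) * (l2 * 2 - 11/14) := by
      have e : 3*(n*k)*(l2*2 - 11/14) - (16/7)*(n*k)*l2 = (n*k)*((26/7)*l2 - 33/14) := by ring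
      have h := mul_nonneg hnk0 (by linarith : (0:ℝ) ≤ (26/7)*l2 - 33/14)
      linarith [e ▸ h]
    have c5 : 3 * (n * k) * (l2 * 2 - 11/14) ≤ X * (l2 * 2 - 11/14) := by
      have := mul_le_mul_of_nonneg_right hX3nk (le_of_lt c3)
      linarith
    have c6 : X * (l2 * 2 - 11/14) ≤ X * (l2 * 2 - s + s/4) :=
      mul_le_mul_of_nonneg_left c2 (le_of_lt hX0)
    calc k * (n * l2) + m * (n * l2) + (k + 1) * l2
        = (k * n + m * n + (k + 1)) * l2 := by ring
    _ ≤ (16/7) * (n * k) * l2 := mul_le_mul_of_nonneg_right c1 (le_of_lt c0)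
    _ ≤ 3 * (n * k) * (l2 * 2 - 11/14) := c4
    _ ≤ X * (l2 * 2 - 11/14) := c5
    _ ≤ X * (l2 * 2 - s + s/4) := c6
  -- step 4: combine with lθ bound
  have st4 : X * (l2 * 2 - (s - 1)) ≤ X * lθ := mul_le_mul_of_nonneg_left hlθ (le_of_lt hX0)
  linarith [st1, st2, st3, st4]

lemma perk (ε : ℝ) (hε0 : 0 < ε) (hε1 : ε ≤ 1) (n k m Kmax M N Dn : ℕ)
    (hN : N = 2 ^ n) (hM : M = 4 * Kmax) (hn7 : 7 ≤ n) (hk1 : 1 ≤ k)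
    (hmk : m ≤ k) (hkK : k ≤ Kmax) (hMN : M ≤ N) (hm1 : 1 ≤ m)
    (hmw : (m : ℝ) ≤ ε * Kmax + 1)
    (hw21 : 21 ≤ ε * Kmax) (hD3 : 3 * (n : ℝ) ≤ ε * Dn) (hD1 : 0 < Dn) :
    (N : ℝ) ^ k * (M : ℝ) ^ m * ((M : ℝ) - m + m * (4 * (ε * Kmax) / m)) ^ (k * Dn)
      ≤ (1 / 2 : ℝ) ^ (k + 1) * (4 * (ε * Kmax) / m) ^ (ε * ((k : ℝ) * Dn))
        * (M : ℝ) ^ (k * Dn) := by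
  set w : ℝ := ε * Kmax with hwdef
  have hw0 : (0 : ℝ) < w := by linarith
  have hmR : (1 : ℝ) ≤ m := by exact_mod_cast hm1
  have hmR0 : (0 : ℝ) < m := by linarith
  set θ : ℝ := 4 * w / m with hθdef
  have hθ1 : (1 : ℝ) ≤ θ := by
    rw [hθdef, le_div_iff₀ hmR0]
    nlinarith
  have hθ0 : (0 : ℝ) < θ := by linarith
  have hKmax1 : 1 ≤ Kmax := le_trans hk1 hkK
  have hMR : (0 : ℝ) < M := by
    have : 0 < M := by omega
    exact_mod_cast this
  have hmM : m ≤ Kmax := le_trans hmk hkK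
  have hmMR : (m : ℝ) < M := by
    have : m < M := by omega
    exact_mod_cast this
  have hmθ : (m : ℝ) * θ = ε * M := by
    rw [hθdef]
    field_simp
    rw [hM]
    push_cast
    ring
  set B : ℝ := (M : ℝ) - m + m * θ with hBdef
  have hBM : B = M * (1 + ε - m / M) := by
    rw [hBdef, hmθ]
    field_simp
    ring
  have hp1 : (m : ℝ) / M < 1 := by
    rw [div_lt_one hMR]; exact hmMR
  have hB0 : 0 < B := by
    rw [hBM]
    have : (0:ℝ) < 1 + ε - m / M := by linarith
    positivity
  have hN0 : (0 : ℝ) < N := by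
    rw [hN]; positivity
  rw [← Real.log_le_log_iff (by positivity) (by positivity)]
  rw [Real.log_mul (by positivity) (by positivity), Real.log_mul (by positivity) (by positivity),
      Real.log_mul (by positivity) (by positivity), Real.log_mul (by positivity) (by positivity),
      Real.log_pow, Real.log_pow, Real.log_pow, Real.log_pow, Real.log_pow,
      Real.log_rpow hθ0]
  have hlogN : Real.log N = n * Real.log 2 := by
    rw [hN]; push_cast; rw [Real.log_pow]
  have hlogM_le : Real.log M ≤ (n : ℝ) * Real.log 2 := by
    rw [← hlogN]
    apply Real.log_le_log hMR
    exact_mod_cast hMN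
  have hlogB : Real.log B = Real.log M + Real.log (1 + ε - m / M) := by
    rw [hBM, Real.log_mul (by positivity) (by linarith)]
  have hlog1 : Real.log (1 + ε - m / M) ≤ ε - m / M := by
    have := Real.log_le_sub_one_of_pos (x := 1 + ε - m / M) (by linarith)
    linarith
  have hlogθ : Real.log 2 * 2 - ((m:ℝ)/w - 1) ≤ Real.log θ := by
    have hexp : θ = 4 / ((m : ℝ) / w) := by
      rw [hθdef]; field_simp
    rw [hexp, Real.log_div (by norm_num) (by positivity)]
    have h4 : Real.log 4 = Real.log 2 * 2 := by
      rw [show (4:ℝ) = 2^2 by norm_num, Real.log_pow]; ring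
    have := Real.log_le_sub_one_of_pos (x := (m:ℝ)/w) (by positivity)
    linarith
  have hlog_half : Real.log (1/2 : ℝ) = - Real.log 2 := by
    rw [one_div, Real.log_inv]
  have hs : (m : ℝ) / w ≤ 22 / 21 := by
    rw [div_le_div_iff₀ hw0 (by norm_num)]
    nlinarith
  have hpw : (m : ℝ) / M = ε * ((m:ℝ)/w) / 4 := by
    rw [hM, hwdef]
    have hK0 : (0:ℝ) < Kmax := by exact_mod_cast hKmax1
    field_simp
    push_cast
    ring
  have hlE : Real.log (1 + ε - m / M) ≤ ε - ε * ((m:ℝ)/w) / 4 := by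
    rw [← hpw]; exact hlog1
  have nc := numeric_core ε k m n Dn w (Real.log 2) (Real.log M) (Real.log θ)
      (Real.log (1 + ε - m / M)) Real.log_two_gt_d9 hε0 hε1
      (by exact_mod_cast hk1) hmR (by exact_mod_cast hmk)
      (by exact_mod_cast hn7) (by exact_mod_cast hD1) hD3 hw21 hs
      hlogM_le (Real.log_nonneg (by exact_mod_cast Nat.one_le_iff_ne_zero.mpr (by omega))) hlogθ hlE
  rw [hlogN, hlogB, hlog_half]
  push_cast
  linarith [nc]

lemma part2_of_part1 (ε : ℝ) (hε0 : 0 < ε) (hε1 : ε ≤ 1) (Kmax N Dn M : ℕ)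
    (hKmax1 : 1 ≤ Kmax) (hM : M = 4 * Kmax) (hD1 : 0 < Dn)
    (f : Fin N → Fin Dn → Fin M)
    (h1 : ∀ X' : Finset (Fin N), X'.card ≤ Kmax →
        ∀ Y' : Finset (Fin M), Y'.card = ⌈ε * X'.card⌉₊ →
          (((X' ×ˢ (Finset.univ : Finset (Fin Dn))).filter
                (fun p => f p.1 p.2 ∈ Y')).card : ℝ) ≤ ε * (X'.card * Dn)) :
    ∀ S : Finset (Fin N), S.Nonempty → S.card ≤ Kmax →
        ∑ y : Fin M, max 0
          ((((S ×ˢ (Finset.univ : Finset (Fin Dn))).filter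
                (fun p => f p.1 p.2 = y)).card : ℝ) /
              (S.card * Dn) - 1 / S.card) ≤ ε := by
  intro S hS hSK
  classical
  set k := S.card with hk
  have hk0 : 0 < k := Finset.card_pos.mpr hS
  have hkR : (0:ℝ) < k := by exact_mod_cast hk0
  have hDR : (0:ℝ) < Dn := by exact_mod_cast hD1
  set m := ⌈ε * k⌉₊ with hm
  have hm1 : 1 ≤ m := Nat.one_le_ceil_iff.mpr (by positivity)
  have hmk : m ≤ k := by
    rw [hm]
    have h : ε * k ≤ (k : ℝ) := by nlinarith
    calc ⌈ε * (k:ℝ)⌉₊ ≤ ⌈(k:ℝ)⌉₊ := Nat.ceil_le_ceil h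
    _ = k := Nat.ceil_natCast k
  have hmM : m ≤ M := by omega
  -- counts
  set c : Fin M → ℕ := fun y => ((S ×ˢ (Finset.univ : Finset (Fin Dn))).filter
                (fun p => f p.1 p.2 = y)).card with hc
  -- choose Y₀ maximizing the sum of counts among m-subsets
  have hP : (Finset.powersetCard m (Finset.univ : Finset (Fin M))).Nonempty := by
    apply Finset.powersetCard_nonempty.mpr
    simpa using hmM
  obtain ⟨Y₀, hY₀P, hY₀max⟩ := Finset.exists_max_image _ (fun Y => ∑ y ∈ Y, c y) hP
  rw [Finset.mem_powersetCard] at hY₀P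
  obtain ⟨-, hY₀card⟩ := hY₀P
  -- the h1 bound for Y₀
  have hsum0 : (∑ y ∈ Y₀, (c y : ℝ)) ≤ ε * (k * Dn) := by
    have hbi : (S ×ˢ (Finset.univ : Finset (Fin Dn))).filter
                (fun p => f p.1 p.2 ∈ Y₀) =
        Y₀.biUnion (fun y => (S ×ˢ (Finset.univ : Finset (Fin Dn))).filter
                (fun p => f p.1 p.2 = y)) := by
      ext p
      simp only [Finset.mem_filter, Finset.mem_biUnion]
      constructor
      · rintro ⟨hp, hy⟩; exact ⟨_, hy, hp, rfl⟩
      · rintro ⟨y, hy, hp, hfy⟩; exact ⟨hp, hfy ▸ hy⟩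
    have hdis : ∀ y₁ ∈ Y₀, ∀ y₂ ∈ Y₀, y₁ ≠ y₂ →
        Disjoint ((S ×ˢ (Finset.univ : Finset (Fin Dn))).filter (fun p => f p.1 p.2 = y₁))
          ((S ×ˢ (Finset.univ : Finset (Fin Dn))).filter (fun p => f p.1 p.2 = y₂)) := by
      intro y₁ _ y₂ _ hne
      rw [Finset.disjoint_left]
      intro p h₁ h₂
      simp only [Finset.mem_filter] at h₁ h₂
      exact hne (h₁.2 ▸ h₂.2 ▸ rfl)
    have hcard := h1 S hSK Y₀ (by rw [hY₀card, hm])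
    rw [hbi, Finset.card_biUnion hdis] at hcard
    rw [← Nat.cast_sum]
    exact hcard
  -- each y outside Y₀ has c y ≤ Dn
  have hout : ∀ y : Fin M, y ∉ Y₀ → (c y : ℝ) ≤ Dn := by
    intro y hy
    -- c y ≤ c y' for all y' ∈ Y₀
    have hle : ∀ y' ∈ Y₀, c y ≤ c y' := by
      intro y' hy'
      by_contra hlt
      push_neg at hlt
      set Y₁ := insert y (Y₀.erase y') with hY₁
      have hyY₁ : y ∉ Y₀.erase y' := fun h => hy (Finset.mem_of_mem_erase h)
      have hcardY₁ : Y₁.card = m := by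
        rw [hY₁, Finset.card_insert_of_notMem hyY₁, Finset.card_erase_of_mem hy', hY₀card]
        omega
      have hmem : Y₁ ∈ Finset.powersetCard m (Finset.univ : Finset (Fin M)) := by
        rw [Finset.mem_powersetCard]
        exact ⟨Finset.subset_univ _, hcardY₁⟩
      have hmax := hY₀max Y₁ hmem
      have hsum₁ : ∑ z ∈ Y₁, c z = c y + ∑ z ∈ Y₀.erase y', c z := by
        rw [hY₁, Finset.sum_insert hyY₁]
      have hsum₂ : ∑ z ∈ Y₀.erase y', c z + c y' = ∑ z ∈ Y₀, c z :=
        Finset.sum_erase_add _ _ hy'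
      omega
    -- m * c y ≤ sum over Y₀ ≤ ε k Dn, and m ≥ ε k
    have h2 : (m : ℝ) * c y ≤ ε * (k * Dn) := by
      calc (m:ℝ) * c y = ∑ _y' ∈ Y₀, (c y : ℝ) := by rw [Finset.sum_const, hY₀card]; ring
      _ ≤ ∑ y' ∈ Y₀, (c y' : ℝ) := Finset.sum_le_sum (fun y' h => by exact_mod_cast hle y' h)
      _ ≤ ε * (k * Dn) := hsum0
    have hmR : ε * k ≤ (m:ℝ) := Nat.le_ceil _
    have hmR0 : (0:ℝ) < m := by exact_mod_cast hm1
    nlinarith [Nat.cast_nonneg (α := ℝ) (c y)]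
  -- split the sum
  have hsplit : ∑ y : Fin M, max 0 ((c y : ℝ) / (k * Dn) - 1 / k)
      = ∑ y ∈ Y₀, max 0 ((c y : ℝ) / (k * Dn) - 1 / k)
        + ∑ y ∈ Y₀ᶜ, max 0 ((c y : ℝ) / (k * Dn) - 1 / k) :=
    (Finset.sum_add_sum_compl Y₀ _).symm
  have hzero : ∑ y ∈ Y₀ᶜ, max 0 ((c y : ℝ) / (k * Dn) - 1 / k) = 0 := by
    apply Finset.sum_eq_zero
    intro y hy
    rw [Finset.mem_compl] at hy
    have := hout y hy
    have hle : (c y : ℝ) / (k * Dn) - 1 / k ≤ 0 := by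
      have h' : (c y : ℝ) / (k * Dn) ≤ 1 / k := by
        rw [div_le_div_iff₀ (by positivity) (by positivity)]
        nlinarith
      linarith
    exact max_eq_left hle
  rw [hsplit, hzero, add_zero]
  have hterm : ∀ y ∈ Y₀, max 0 ((c y : ℝ) / (k * Dn) - 1 / k) ≤ (c y : ℝ) / (k * Dn) := by
    intro y _
    apply max_le (by positivity)
    have : (0:ℝ) ≤ 1 / k := by positivity
    linarith
  calc ∑ y ∈ Y₀, max 0 ((c y : ℝ) / (k * Dn) - 1 / k) ≤ ∑ y ∈ Y₀, (c y : ℝ) / (k * Dn) :=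
        Finset.sum_le_sum hterm
  _ = (∑ y ∈ Y₀, (c y : ℝ)) / (k * Dn) := by rw [Finset.sum_div]
  _ ≤ ε * (k * Dn) / (k * Dn) := by
        apply div_le_div_of_nonneg_right hsum0 (by positivity) |>.trans_eq rfl
  _ = ε := by field_simp

-- count of i < Dn with i % M = y is at most Dn/M + 1
lemma mod_count_le (Dn M : ℕ) (hM : 0 < M) (y : ℕ) :
    (((Finset.univ : Finset (Fin Dn))).filter (fun i => i.val % M = y)).card
      ≤ Dn / M + 1 := by
  classical
  have hinj : Set.InjOn (fun i : Fin Dn => i.val / M)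
      ((Finset.univ : Finset (Fin Dn)).filter (fun i => i.val % M = y)) := by
    intro a ha b hb hab
    simp only [Finset.coe_filter, Set.mem_setOf_eq, Finset.mem_univ, true_and] at ha hb
    have : a.val = b.val := by
      have hab' : a.val / M = b.val / M := by exact hab
      have ha2 : a.val % M = y := ha
      have hb2 : b.val % M = y := hb
      have ha' := Nat.div_add_mod a.val M
      have hb' := Nat.div_add_mod b.val M
      rw [ha2, hab'] at ha'
      rw [hb2] at hb'
      exact ha'.symm.trans hb'
    exact Fin.ext this
  have hmap : ∀ i ∈ ((Finset.univ : Finset (Fin Dn))).filter (fun i => i.val % M = y),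
      i.val / M ∈ Finset.range (Dn / M + 1) := by
    intro i _
    rw [Finset.mem_range]
    have : i.val / M ≤ Dn / M := Nat.div_le_div_right (le_of_lt i.isLt)
    omega
  calc _ ≤ (Finset.range (Dn / M + 1)).card := Finset.card_le_card_of_injOn _ hmap hinj
  _ = Dn / M + 1 := Finset.card_range _

lemma caseA (ε : ℝ) (hε0 : 0 < ε) (Kmax N Dn M : ℕ)
    (hM : M = 4 * Kmax) (hM0 : 0 < M)
    (hA : (⌈ε * Kmax⌉₊ : ℝ) * (Dn / M + 1 : ℕ) ≤ ε * Dn) :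
    ∃ f : Fin N → Fin Dn → Fin M,
      ∀ X' : Finset (Fin N), X'.card ≤ Kmax →
        ∀ Y' : Finset (Fin M), Y'.card = ⌈ε * X'.card⌉₊ →
          (((X' ×ˢ (Finset.univ : Finset (Fin Dn))).filter
                (fun p => f p.1 p.2 ∈ Y')).card : ℝ) ≤ ε * (X'.card * Dn) := by
  classical
  refine ⟨fun _ i => ⟨i.val % M, Nat.mod_lt _ hM0⟩, ?_⟩
  intro X hXK Y hY
  set k := X.card with hk
  set m := ⌈ε * k⌉₊ with hm
  -- the filter is a product
  have hprod : ((X ×ˢ (Finset.univ : Finset (Fin Dn))).filter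
        (fun p => (⟨p.2.val % M, Nat.mod_lt _ hM0⟩ : Fin M) ∈ Y)) =
      X ×ˢ ((Finset.univ : Finset (Fin Dn)).filter
        (fun i => (⟨i.val % M, Nat.mod_lt _ hM0⟩ : Fin M) ∈ Y)) := by
    ext p
    simp only [Finset.mem_filter, Finset.mem_product, Finset.mem_univ, true_and, and_assoc]
  rw [hprod, Finset.card_product]
  -- inner count ≤ m * (Dn/M + 1)
  have hinner : ((Finset.univ : Finset (Fin Dn)).filter
        (fun i => (⟨i.val % M, Nat.mod_lt _ hM0⟩ : Fin M) ∈ Y)).card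
      ≤ m * (Dn / M + 1) := by
    have hsub : ((Finset.univ : Finset (Fin Dn)).filter
          (fun i => (⟨i.val % M, Nat.mod_lt _ hM0⟩ : Fin M) ∈ Y))
        ⊆ Y.biUnion (fun y => (Finset.univ : Finset (Fin Dn)).filter
          (fun i => i.val % M = y.val)) := by
      intro i hi
      rw [Finset.mem_filter] at hi
      rw [Finset.mem_biUnion]
      exact ⟨_, hi.2, by simp⟩
    calc _ ≤ (Y.biUnion (fun y => (Finset.univ : Finset (Fin Dn)).filter
          (fun i => i.val % M = y.val))).card := Finset.card_le_card hsub
    _ ≤ ∑ y ∈ Y, ((Finset.univ : Finset (Fin Dn)).filter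
          (fun i => i.val % M = y.val)).card := Finset.card_biUnion_le
    _ ≤ ∑ _y ∈ Y, (Dn / M + 1) := Finset.sum_le_sum (fun y _ => mod_count_le Dn M hM0 _)
    _ = m * (Dn / M + 1) := by rw [Finset.sum_const, hY, smul_eq_mul]
  -- now real arithmetic
  have hmono : (m : ℝ) * (Dn / M + 1 : ℕ) ≤ ε * Dn := by
    have h1 : (m : ℝ) ≤ (⌈ε * Kmax⌉₊ : ℝ) := by
      have : m ≤ ⌈ε * Kmax⌉₊ := Nat.ceil_le_ceil (by
        have : (k : ℝ) ≤ Kmax := by exact_mod_cast hXK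
        nlinarith)
      exact_mod_cast this
    have h2 : (0:ℝ) ≤ (Dn / M + 1 : ℕ) := Nat.cast_nonneg _
    nlinarith
  calc ((k * ((Finset.univ : Finset (Fin Dn)).filter
        (fun i => (⟨i.val % M, Nat.mod_lt _ hM0⟩ : Fin M) ∈ Y)).card : ℕ) : ℝ)
      ≤ (k : ℝ) * (m * (Dn / M + 1) : ℕ) := by
        rw [Nat.cast_mul]
        exact mul_le_mul_of_nonneg_left (by exact_mod_cast hinner) (Nat.cast_nonneg _)
  _ = (k : ℝ) * ((m : ℝ) * ((Dn / M + 1 : ℕ) : ℝ)) := by push_cast; ring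
  _ ≤ (k : ℝ) * (ε * Dn) := mul_le_mul_of_nonneg_left hmono (Nat.cast_nonneg _)
  _ = ε * (k * Dn) := by ring

-- MGF-style sum identity
lemma mgf_sum (N Dn M : ℕ) (X : Finset (Fin N)) (Y : Finset (Fin M)) (θ : ℝ) :
    ∑ g : (Fin N × Fin Dn) → Fin M,
        θ ^ (((X ×ˢ (univ : Finset (Fin Dn))).filter (fun p => g p ∈ Y)).card)
      = ((Y.card : ℝ) * θ + ((M : ℕ) - (Y.card : ℕ) : ℕ)) ^ (X.card * Dn)
        * (M : ℝ) ^ (N * Dn - X.card * Dn) := by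
  classical
  set T := X ×ˢ (univ : Finset (Fin Dn)) with hT
  have hTcard : T.card = X.card * Dn := by
    rw [hT, Finset.card_product, Finset.card_univ, Fintype.card_fin]
  -- rewrite each power as product
  have step1 : ∀ g : (Fin N × Fin Dn) → Fin M,
      θ ^ ((T.filter (fun p => g p ∈ Y)).card)
        = ∏ a : Fin N × Fin Dn, (if a ∈ T then (if g a ∈ Y then θ else 1) else 1) := by
    intro g
    rw [Finset.card_filter, ← Finset.prod_pow_eq_pow_sum]
    have h2 : ∏ a ∈ T, θ ^ (if g a ∈ Y then 1 else 0)
        = ∏ a ∈ T, (if g a ∈ Y then θ else 1) := by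
      apply Finset.prod_congr rfl
      intro a _
      split <;> simp
    rw [h2]
    rw [Finset.prod_ite_mem univ T (fun a => if g a ∈ Y then θ else 1), Finset.univ_inter]
  simp_rw [step1]
  have step2 := Finset.prod_univ_sum (fun _ : Fin N × Fin Dn => (univ : Finset (Fin M)))
      (fun a v => if a ∈ T then (if v ∈ Y then θ else 1) else 1)
  rw [Fintype.piFinset_univ] at step2
  rw [← step2]
  -- compute inner sums
  have hinner : ∀ a : Fin N × Fin Dn,
      (∑ v : Fin M, (if a ∈ T then (if v ∈ Y then θ else 1) else 1))
        = (if a ∈ T then ((Y.card : ℝ) * θ + ((M : ℕ) - (Y.card : ℕ) : ℕ)) else (M:ℝ)) := by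
    intro a
    by_cases ha : a ∈ T
    · simp only [ha, if_true]
      rw [Finset.sum_ite, Finset.sum_const, Finset.sum_const]
      have h1 : univ.filter (fun v : Fin M => v ∈ Y) = Y := by
        ext v; simp
      have h2 : univ.filter (fun v : Fin M => ¬ v ∈ Y) = Yᶜ := by
        ext v; simp
      rw [h1, h2, Finset.card_compl, Fintype.card_fin]
      simp [nsmul_eq_mul]
    · simp only [ha, if_false]
      rw [Finset.sum_const, Finset.card_univ, Fintype.card_fin]
      simp [nsmul_eq_mul]
  rw [Finset.prod_congr rfl (fun a _ => hinner a)]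
  have hf1 : univ.filter (fun a : Fin N × Fin Dn => a ∈ T) = T := by ext a; simp
  have hf2 : univ.filter (fun a : Fin N × Fin Dn => ¬ a ∈ T) = Tᶜ := by ext a; simp
  rw [Finset.prod_ite, hf1, hf2, Finset.prod_const, Finset.prod_const, Finset.card_compl,
    hTcard, Fintype.card_prod, Fintype.card_fin, Fintype.card_fin]

lemma caseB (ε : ℝ) (hε0 : 0 < ε) (hε1 : ε ≤ 1) (n Kmax N Dn M : ℕ)
    (hN : N = 2 ^ n) (hM : M = 4 * Kmax) (hn7 : 7 ≤ n) (hw21 : 21 ≤ ε * Kmax)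
    (hMN : M ≤ N) (hD3 : 3 * (n : ℝ) ≤ ε * Dn) (hD1 : 0 < Dn) :
    ∃ f : Fin N → Fin Dn → Fin M,
      ∀ X' : Finset (Fin N), X'.card ≤ Kmax →
        ∀ Y' : Finset (Fin M), Y'.card = ⌈ε * X'.card⌉₊ →
          (((X' ×ˢ (Finset.univ : Finset (Fin Dn))).filter
                (fun p => f p.1 p.2 ∈ Y')).card : ℝ) ≤ ε * (X'.card * Dn) := by
  classical
  have hKmax1 : 1 ≤ Kmax := by
    by_contra h
    push_neg at h
    interval_cases Kmax
    · simp at hw21; linarith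
  have hM0 : 0 < M := by omega
  -- bad sets
  set BadF : Finset (Fin N) → Finset (Fin M) → Finset ((Fin N × Fin Dn) → Fin M) :=
    fun X Y => univ.filter (fun g => ¬ ((((X ×ˢ (univ : Finset (Fin Dn))).filter
        (fun p => g p ∈ Y)).card : ℝ) ≤ ε * (X.card * Dn))) with hBadF
  -- per (X,Y) bound
  have hperXY : ∀ k : ℕ, 1 ≤ k → k ≤ Kmax → ∀ X : Finset (Fin N), X.card = k →
      ∀ Y : Finset (Fin M), Y.card = ⌈ε * (k:ℝ)⌉₊ →
      ((BadF X Y).card : ℝ) * ((4 * (ε * Kmax) / (⌈ε * (k:ℝ)⌉₊ : ℝ)) ^ (ε * ((k:ℝ) * Dn)))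
        ≤ (((⌈ε * (k:ℝ)⌉₊ : ℝ)) * (4 * (ε * Kmax) / (⌈ε * (k:ℝ)⌉₊ : ℝ))
            + ((M : ℕ) - (⌈ε * (k:ℝ)⌉₊ : ℕ) : ℕ)) ^ (k * Dn)
          * (M : ℝ) ^ (N * Dn - k * Dn) := by
    intro k hk1 hkK X hX Y hY
    set m : ℕ := ⌈ε * (k:ℝ)⌉₊ with hm
    set θ : ℝ := 4 * (ε * Kmax) / (m : ℝ) with hθ
    have hm1 : 1 ≤ m := Nat.one_le_ceil_iff.mpr (by positivity)
    have hmR0 : (0:ℝ) < m := by exact_mod_cast hm1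
    have hw0 : (0:ℝ) < ε * Kmax := by linarith
    have hmw : (m:ℝ) ≤ ε * Kmax + 1 := by
      have h1 : (m:ℝ) < ε * k + 1 := Nat.ceil_lt_add_one (by positivity)
      have h2 : ε * k ≤ ε * Kmax := by
        have : (k:ℝ) ≤ Kmax := by exact_mod_cast hkK
        nlinarith
      linarith
    have hθ1 : (1:ℝ) ≤ θ := by
      rw [hθ, le_div_iff₀ hmR0]
      linarith
    have hθ0 : (0:ℝ) < θ := by linarith
    -- card * θ^e ≤ Σ_{g ∈ BadF} θ^cnt
    have hstep : ((BadF X Y).card : ℝ) * (θ ^ (ε * ((k:ℝ) * Dn)))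
        ≤ ∑ g ∈ BadF X Y, θ ^ ((((X ×ˢ (univ : Finset (Fin Dn))).filter
            (fun p => g p ∈ Y)).card)) := by
      rw [Finset.card_eq_sum_ones, Nat.cast_sum, Finset.sum_mul]
      apply Finset.sum_le_sum
      intro g hg
      rw [Nat.cast_one, one_mul]
      have hbad : ¬ ((((X ×ˢ (univ : Finset (Fin Dn))).filter
          (fun p => g p ∈ Y)).card : ℝ) ≤ ε * (X.card * Dn)) := by
        rw [hBadF] at hg
        exact (Finset.mem_filter.mp hg).2
      push_neg at hbad
      have hle : ε * ((k:ℝ) * Dn) ≤ (((X ×ˢ (univ : Finset (Fin Dn))).filter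
          (fun p => g p ∈ Y)).card : ℝ) := by
        rw [hX] at hbad
        exact le_of_lt hbad
      calc θ ^ (ε * ((k:ℝ) * Dn)) ≤ θ ^ (((((X ×ˢ (univ : Finset (Fin Dn))).filter
          (fun p => g p ∈ Y)).card : ℕ) : ℝ)) := Real.rpow_le_rpow_of_exponent_le hθ1 hle
      _ = θ ^ ((((X ×ˢ (univ : Finset (Fin Dn))).filter
          (fun p => g p ∈ Y)).card)) := Real.rpow_natCast _ _
    -- extend to the full sum
    have hfull : ∑ g ∈ BadF X Y, θ ^ ((((X ×ˢ (univ : Finset (Fin Dn))).filter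
            (fun p => g p ∈ Y)).card))
        ≤ ∑ g : (Fin N × Fin Dn) → Fin M, θ ^ ((((X ×ˢ (univ : Finset (Fin Dn))).filter
            (fun p => g p ∈ Y)).card)) := by
      apply Finset.sum_le_sum_of_subset_of_nonneg (Finset.subset_univ _)
      intro g _ _
      positivity
    have := mgf_sum N Dn M X Y θ
    rw [hX, hY] at this
    calc ((BadF X Y).card : ℝ) * (θ ^ (ε * ((k:ℝ) * Dn))) ≤ _ := hstep
    _ ≤ _ := hfull
    _ = _ := by rw [this]
  -- per-k sum bound
  have hperk : ∀ k : ℕ, k ∈ Finset.range (Kmax + 1) →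
      ∑ q ∈ (univ.powersetCard k (α := Fin N)) ×ˢ (univ.powersetCard ⌈ε * (k:ℝ)⌉₊ (α := Fin M)),
        (((BadF q.1 q.2).card : ℝ))
      ≤ (1/2:ℝ) ^ (k+1) * (M:ℝ) ^ (N * Dn) := by
    intro k hk
    rw [Finset.mem_range] at hk
    rcases Nat.eq_zero_or_pos k with hk0 | hk1
    · -- k = 0 : all BadF empty
      subst hk0
      have hzero : ∀ q ∈ (univ.powersetCard 0 (α := Fin N)) ×ˢ (univ.powersetCard ⌈ε * ((0:ℕ):ℝ)⌉₊ (α := Fin M)),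
          (((BadF q.1 q.2).card : ℝ)) = 0 := by
        rintro ⟨X, Y⟩ hq
        rw [Finset.mem_product, Finset.mem_powersetCard] at hq
        have hX0 : X = ∅ := Finset.card_eq_zero.mp hq.1.2
        subst hX0
        simp only [hBadF]
        norm_num
      rw [Finset.sum_congr rfl hzero, Finset.sum_const, smul_zero]
      positivity
    · -- k ≥ 1
      set m : ℕ := ⌈ε * (k:ℝ)⌉₊ with hm
      set θ : ℝ := 4 * (ε * Kmax) / (m : ℝ) with hθ
      have hm1 : 1 ≤ m := Nat.one_le_ceil_iff.mpr (by positivity)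
      have hmR0 : (0:ℝ) < m := by exact_mod_cast hm1
      have hmk : m ≤ k := by
        rw [hm, Nat.ceil_le]
        nlinarith [Nat.cast_nonneg (α := ℝ) k]
      have hkK : k ≤ Kmax := by omega
      have hmM : m ≤ M := by omega
      have hw0 : (0:ℝ) < ε * Kmax := by linarith
      have hθ0 : (0:ℝ) < θ := by rw [hθ]; positivity
      have hmw : (m:ℝ) ≤ ε * Kmax + 1 := by
        have h1 : (m:ℝ) < ε * k + 1 := Nat.ceil_lt_add_one (by positivity)
        have h2 : ε * k ≤ ε * Kmax := by
          have : (k:ℝ) ≤ Kmax := by exact_mod_cast hkK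
          nlinarith
        linarith
      have hcastMm : (((M : ℕ) - (m : ℕ) : ℕ) : ℝ) = (M:ℝ) - m := by
        rw [Nat.cast_sub hmM]
      have hE0 : (0:ℝ) < θ ^ (ε * ((k:ℝ) * Dn)) := Real.rpow_pos_of_pos hθ0 _
      have hkDn : k * Dn ≤ N * Dn := Nat.mul_le_mul_right Dn (by omega)
      -- perk instantiated
      have hpk := perk ε hε0 hε1 n k m Kmax M N Dn hN hM hn7 hk1 hmk hkK hMN hm1 hmw hw21 hD3 hD1
      -- bound each term
      have hterm : ∀ q ∈ (univ.powersetCard k (α := Fin N)) ×ˢ (univ.powersetCard m (α := Fin M)),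
          (((BadF q.1 q.2).card : ℝ)) * (θ ^ (ε * ((k:ℝ) * Dn)))
            ≤ ((m : ℝ) * θ + ((M : ℕ) - (m : ℕ) : ℕ)) ^ (k * Dn) * (M : ℝ) ^ (N * Dn - k * Dn) := by
        rintro ⟨X, Y⟩ hq
        rw [Finset.mem_product, Finset.mem_powersetCard, Finset.mem_powersetCard] at hq
        exact hperXY k hk1 hkK X hq.1.2 Y hq.2.2
      -- sum bound
      have hsum : (∑ q ∈ (univ.powersetCard k (α := Fin N)) ×ˢ (univ.powersetCard m (α := Fin M)),
            (((BadF q.1 q.2).card : ℝ))) * (θ ^ (ε * ((k:ℝ) * Dn)))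
          ≤ ((N:ℝ) ^ k * (M:ℝ) ^ m) * (((m : ℝ) * θ + ((M : ℕ) - (m : ℕ) : ℕ)) ^ (k * Dn)
              * (M : ℝ) ^ (N * Dn - k * Dn)) := by
        rw [Finset.sum_mul]
        calc ∑ q ∈ (univ.powersetCard k (α := Fin N)) ×ˢ (univ.powersetCard m (α := Fin M)),
              (((BadF q.1 q.2).card : ℝ)) * (θ ^ (ε * ((k:ℝ) * Dn)))
            ≤ ∑ _q ∈ (univ.powersetCard k (α := Fin N)) ×ˢ (univ.powersetCard m (α := Fin M)),
              (((m : ℝ) * θ + ((M : ℕ) - (m : ℕ) : ℕ)) ^ (k * Dn) * (M : ℝ) ^ (N * Dn - k * Dn)) :=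
              Finset.sum_le_sum hterm
        _ = ((univ.powersetCard k (α := Fin N)) ×ˢ (univ.powersetCard m (α := Fin M))).card
              • (((m : ℝ) * θ + ((M : ℕ) - (m : ℕ) : ℕ)) ^ (k * Dn) * (M : ℝ) ^ (N * Dn - k * Dn)) :=
              Finset.sum_const _
        _ ≤ _ := by
              rw [nsmul_eq_mul]
              apply mul_le_mul_of_nonneg_right
              · rw [Finset.card_product, Finset.card_powersetCard, Finset.card_powersetCard,
                  Finset.card_univ, Finset.card_univ, Fintype.card_fin, Fintype.card_fin]
                push_cast
                apply mul_le_mul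
                · exact_mod_cast Nat.choose_le_pow N k
                · exact_mod_cast Nat.choose_le_pow M m
                · positivity
                · positivity
              · have h1 : (0:ℝ) ≤ (m : ℝ) * θ + ((M : ℕ) - (m : ℕ) : ℕ) := by positivity
                positivity
      -- use perk
      have hBeq : (m : ℝ) * θ + (((M : ℕ) - (m : ℕ) : ℕ) : ℝ) = (M : ℝ) - m + m * θ := by
        rw [hcastMm]; ring
      have hfinal : ((N:ℝ) ^ k * (M:ℝ) ^ m) * (((m : ℝ) * θ + ((M : ℕ) - (m : ℕ) : ℕ)) ^ (k * Dn)
              * (M : ℝ) ^ (N * Dn - k * Dn))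
          ≤ ((1/2:ℝ) ^ (k+1) * (M:ℝ) ^ (N * Dn)) * (θ ^ (ε * ((k:ℝ) * Dn))) := by
        have hMpow : (M:ℝ) ^ (k * Dn) * (M:ℝ) ^ (N * Dn - k * Dn) = (M:ℝ) ^ (N * Dn) := by
          rw [← pow_add]
          congr 1
          omega
        calc ((N:ℝ) ^ k * (M:ℝ) ^ m) * (((m : ℝ) * θ + ((M : ℕ) - (m : ℕ) : ℕ)) ^ (k * Dn)
                * (M : ℝ) ^ (N * Dn - k * Dn))
            = ((N:ℝ) ^ k * (M:ℝ) ^ m * ((M : ℝ) - m + m * θ) ^ (k * Dn))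
                * (M : ℝ) ^ (N * Dn - k * Dn) := by rw [hBeq]; ring
        _ ≤ ((1/2:ℝ) ^ (k+1) * θ ^ (ε * ((k:ℝ) * Dn)) * (M:ℝ) ^ (k * Dn))
                * (M : ℝ) ^ (N * Dn - k * Dn) := by
              apply mul_le_mul_of_nonneg_right _ (by positivity)
              exact hpk
        _ = ((1/2:ℝ) ^ (k+1) * (M:ℝ) ^ (N * Dn)) * (θ ^ (ε * ((k:ℝ) * Dn))) := by
              rw [← hMpow]; ring
      have := le_trans hsum hfinal
      exact le_of_mul_le_mul_right this hE0
  -- global bad set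
  set Bad : Finset ((Fin N × Fin Dn) → Fin M) := univ.filter (fun g =>
    ¬ (∀ X : Finset (Fin N), X.card ≤ Kmax → ∀ Y : Finset (Fin M), Y.card = ⌈ε * X.card⌉₊ →
        (((X ×ˢ (univ : Finset (Fin Dn))).filter (fun p => g p ∈ Y)).card : ℝ)
          ≤ ε * (X.card * Dn))) with hBad
  have hcover : Bad ⊆ (Finset.range (Kmax + 1)).biUnion (fun k =>
      ((univ.powersetCard k (α := Fin N)) ×ˢ (univ.powersetCard ⌈ε * (k:ℝ)⌉₊ (α := Fin M))).biUnion
        (fun q => BadF q.1 q.2)) := by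
    intro g hg
    rw [hBad, Finset.mem_filter] at hg
    push_neg at hg
    obtain ⟨-, X, hXK, Y, hYc, hviol⟩ := hg
    rw [Finset.mem_biUnion]
    refine ⟨X.card, Finset.mem_range.mpr (by omega), ?_⟩
    rw [Finset.mem_biUnion]
    refine ⟨(X, Y), ?_, ?_⟩
    · rw [Finset.mem_product, Finset.mem_powersetCard, Finset.mem_powersetCard]
      exact ⟨⟨Finset.subset_univ _, rfl⟩, ⟨Finset.subset_univ _, hYc⟩⟩
    · rw [hBadF, Finset.mem_filter]
      exact ⟨Finset.mem_univ _, by push_neg; exact hviol⟩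
  -- card bound
  have hcard1 : (Bad.card : ℝ) ≤ ∑ k ∈ Finset.range (Kmax + 1),
      ∑ q ∈ (univ.powersetCard k (α := Fin N)) ×ˢ (univ.powersetCard ⌈ε * (k:ℝ)⌉₊ (α := Fin M)),
        (((BadF q.1 q.2).card : ℝ)) := by
    have h1 : Bad.card ≤ ∑ k ∈ Finset.range (Kmax + 1),
        (((univ.powersetCard k (α := Fin N)) ×ˢ (univ.powersetCard ⌈ε * (k:ℝ)⌉₊ (α := Fin M))).biUnion
          (fun q => BadF q.1 q.2)).card :=
      le_trans (Finset.card_le_card hcover) Finset.card_biUnion_le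
    have h2 : ∀ k, (((univ.powersetCard k (α := Fin N)) ×ˢ (univ.powersetCard ⌈ε * (k:ℝ)⌉₊ (α := Fin M))).biUnion
          (fun q => BadF q.1 q.2)).card
        ≤ ∑ q ∈ (univ.powersetCard k (α := Fin N)) ×ˢ (univ.powersetCard ⌈ε * (k:ℝ)⌉₊ (α := Fin M)),
          (BadF q.1 q.2).card := fun k => Finset.card_biUnion_le
    calc (Bad.card : ℝ) ≤ ((∑ k ∈ Finset.range (Kmax + 1),
        (((univ.powersetCard k (α := Fin N)) ×ˢ (univ.powersetCard ⌈ε * (k:ℝ)⌉₊ (α := Fin M))).biUnion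
          (fun q => BadF q.1 q.2)).card : ℕ) : ℝ) := by exact_mod_cast h1
    _ ≤ _ := by
        push_cast
        apply Finset.sum_le_sum
        intro k _
        exact_mod_cast h2 k
  have hgeom : ∑ k ∈ Finset.range (Kmax + 1), ((1/2:ℝ) ^ (k+1) * (M:ℝ) ^ (N * Dn))
      < (M:ℝ) ^ (N * Dn) := by
    have hMR : (0:ℝ) < (M:ℝ) ^ (N * Dn) := by
      have : (0:ℝ) < M := by exact_mod_cast hM0
      positivity
    have hsum : ∑ k ∈ Finset.range (Kmax + 1), (1/2:ℝ) ^ (k+1) < 1 := by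
      have h1 : ∀ k, (1/2:ℝ) ^ (k+1) = (1/2) * (1/2)^k := fun k => by ring
      simp_rw [h1]
      rw [← Finset.mul_sum]
      have := geom_sum_eq (x := (1/2:ℝ)) (by norm_num) (Kmax + 1)
      rw [this]
      have hp : (0:ℝ) < (1/2:ℝ)^(Kmax+1) := by positivity
      have he : (((1/2:ℝ)) ^ (Kmax + 1) - 1) / ((1/2:ℝ) - 1) = 2 * (1 - (1/2:ℝ)^(Kmax+1)) := by
        ring
      rw [he]
      nlinarith [hp]
    calc ∑ k ∈ Finset.range (Kmax + 1), ((1/2:ℝ) ^ (k+1) * (M:ℝ) ^ (N * Dn))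
        = (∑ k ∈ Finset.range (Kmax + 1), (1/2:ℝ) ^ (k+1)) * (M:ℝ) ^ (N * Dn) := by
          rw [Finset.sum_mul]
    _ < 1 * (M:ℝ) ^ (N * Dn) := by
          apply mul_lt_mul_of_pos_right hsum hMR
    _ = _ := one_mul _
  have hlt : (Bad.card : ℝ) < (M:ℝ) ^ (N * Dn) := by
    calc (Bad.card : ℝ) ≤ _ := hcard1
    _ ≤ ∑ k ∈ Finset.range (Kmax + 1), ((1/2:ℝ) ^ (k+1) * (M:ℝ) ^ (N * Dn)) :=
        Finset.sum_le_sum hperk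
    _ < _ := hgeom
  -- extract a good g
  have hcardU : Fintype.card ((Fin N × Fin Dn) → Fin M) = M ^ (N * Dn) := by
    rw [Fintype.card_fun, Fintype.card_prod, Fintype.card_fin, Fintype.card_fin, Fintype.card_fin]
  have hltN : Bad.card < Fintype.card ((Fin N × Fin Dn) → Fin M) := by
    rw [hcardU]
    exact_mod_cast hlt
  have hne : Badᶜ.Nonempty := by
    rw [← Finset.card_pos, Finset.card_compl]
    omega
  obtain ⟨g, hg⟩ := hne
  rw [Finset.mem_compl, hBad, Finset.mem_filter] at hg
  push_neg at hg
  have hgood := hg (Finset.mem_univ _)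
  refine ⟨fun x i => g (x, i), ?_⟩
  intro X hXK Y hYc
  exact hgood X hXK Y hYc

theorem stmt_15 (ε : ℝ) (hε0 : 0 < ε) (hε1 : ε ≤ 1) (n Kmax : ℕ) (hn : 0 < n)
    (hKmax : (1 : ℝ) < ε * Kmax) (hcard : 4 * Kmax ≤ 2 ^ n) :
    ∃ f : Fin (2 ^ n) → Fin ⌈3 * (n : ℝ) / ε⌉₊ → Fin (4 * Kmax),
      (∀ X' : Finset (Fin (2 ^ n)), X'.card ≤ Kmax →
        ∀ Y' : Finset (Fin (4 * Kmax)), Y'.card = ⌈ε * X'.card⌉₊ →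
          (((X' ×ˢ (Finset.univ : Finset (Fin ⌈3 * (n : ℝ) / ε⌉₊))).filter
                (fun p => f p.1 p.2 ∈ Y')).card : ℝ) ≤
            ε * (X'.card * ⌈3 * (n : ℝ) / ε⌉₊)) ∧
      (∀ S : Finset (Fin (2 ^ n)), S.Nonempty → S.card ≤ Kmax →
        ∑ y : Fin (4 * Kmax), max 0
          ((((S ×ˢ (Finset.univ : Finset (Fin ⌈3 * (n : ℝ) / ε⌉₊))).filter
                (fun p => f p.1 p.2 = y)).card : ℝ) /
              (S.card * ⌈3 * (n : ℝ) / ε⌉₊) - 1 / S.card) ≤ ε) := by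
  classical
  have hKmax1 : 1 ≤ Kmax := by
    by_contra h
    push_neg at h
    interval_cases Kmax
    · simp at hKmax; linarith
  have hM0 : 0 < 4 * Kmax := by omega
  have hnR : (1:ℝ) ≤ n := by exact_mod_cast hn
  have hD1 : 0 < ⌈3 * (n : ℝ) / ε⌉₊ := Nat.ceil_pos.mpr (by positivity)
  have hD3 : 3 * (n : ℝ) ≤ ε * ⌈3 * (n : ℝ) / ε⌉₊ := by
    have h := Nat.le_ceil (3 * (n : ℝ) / ε)
    calc 3 * (n : ℝ) = ε * (3 * (n:ℝ) / ε) := by field_simp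
    _ ≤ ε * ⌈3 * (n : ℝ) / ε⌉₊ := by nlinarith
  obtain ⟨f, h1⟩ : ∃ f : Fin (2 ^ n) → Fin ⌈3 * (n : ℝ) / ε⌉₊ → Fin (4 * Kmax),
      ∀ X' : Finset (Fin (2 ^ n)), X'.card ≤ Kmax →
        ∀ Y' : Finset (Fin (4 * Kmax)), Y'.card = ⌈ε * X'.card⌉₊ →
          (((X' ×ˢ (Finset.univ : Finset (Fin ⌈3 * (n : ℝ) / ε⌉₊))).filter
                (fun p => f p.1 p.2 ∈ Y')).card : ℝ) ≤
            ε * (X'.card * ⌈3 * (n : ℝ) / ε⌉₊) := by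
    by_cases hA : (⌈ε * (Kmax:ℝ)⌉₊ : ℝ) * ((⌈3 * (n : ℝ) / ε⌉₊ / (4 * Kmax) + 1 : ℕ) : ℝ)
        ≤ ε * ⌈3 * (n : ℝ) / ε⌉₊
    · exact caseA ε hε0 Kmax (2^n) ⌈3 * (n : ℝ) / ε⌉₊ (4 * Kmax) rfl hM0 hA
    · -- derive case B facts
      push_neg at hA
      set Dn := ⌈3 * (n : ℝ) / ε⌉₊ with hDn
      set w := ε * (Kmax : ℝ) with hw
      have hw1 : 1 < w := hKmax
      have hDM : Dn < 4 * Kmax := by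
        by_contra hDM
        push_neg at hDM
        -- then (Dn / M + 1 : ℕ) ≤ 2 * Dn / M in ℝ and we get a contradiction
        have hDnR : (0:ℝ) < Dn := by exact_mod_cast hD1
        have hMR : (0:ℝ) < (4 * Kmax : ℕ) := by exact_mod_cast hM0
        have h1 : ((Dn / (4 * Kmax) : ℕ) : ℝ) ≤ (Dn : ℝ) / ((4 * Kmax : ℕ) : ℝ) :=
          Nat.cast_div_le
        have h2 : (1:ℝ) ≤ (Dn : ℝ) / ((4 * Kmax : ℕ) : ℝ) := by
          rw [le_div_iff₀ hMR]
          rw [one_mul]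
          exact_mod_cast hDM
        have h3 : ((Dn / (4 * Kmax) + 1 : ℕ) : ℝ) ≤ 2 * ((Dn : ℝ) / ((4 * Kmax : ℕ) : ℝ)) := by
          push_cast at h1 h2 ⊢
          linarith
        have h4 : (⌈w⌉₊ : ℝ) < 2 * w := by
          have := Nat.ceil_lt_add_one (le_of_lt (lt_trans one_pos hw1))
          linarith
        have h5 : ε * Dn < 2 * w * (2 * ((Dn : ℝ) / ((4 * Kmax : ℕ) : ℝ))) := by
          calc ε * (Dn:ℝ) < (⌈w⌉₊ : ℝ) * ((Dn / (4 * Kmax) + 1 : ℕ) : ℝ) := hA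
          _ ≤ (⌈w⌉₊ : ℝ) * (2 * ((Dn : ℝ) / ((4 * Kmax : ℕ) : ℝ))) := by
              apply mul_le_mul_of_nonneg_left h3 (Nat.cast_nonneg _)
          _ ≤ (2 * w) * (2 * ((Dn : ℝ) / ((4 * Kmax : ℕ) : ℝ))) := by
              apply mul_le_mul_of_nonneg_right (le_of_lt h4)
              positivity
        have h6 : 2 * w * (2 * ((Dn : ℝ) / ((4 * Kmax : ℕ) : ℝ))) = ε * Dn := by
          rw [hw]
          push_cast
          field_simp
          ring
        linarith
      have hA1 : ε * (Dn:ℝ) < ⌈w⌉₊ := by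
        have : Dn / (4 * Kmax) = 0 := Nat.div_eq_of_lt hDM
        rw [this] at hA
        simpa using hA
      have hceil : 3 * n + 1 ≤ ⌈w⌉₊ := by
        have h7 : (3 * (n:ℝ)) < (⌈w⌉₊ : ℝ) := lt_of_le_of_lt hD3 hA1
        have : (3 * n : ℕ) < ⌈w⌉₊ := by exact_mod_cast h7
        omega
      have hceilK : ⌈w⌉₊ ≤ Kmax := by
        rw [hw]
        calc ⌈ε * (Kmax:ℝ)⌉₊ ≤ ⌈(Kmax:ℝ)⌉₊ := Nat.ceil_le_ceil (by nlinarith [Nat.cast_nonneg (α := ℝ) Kmax])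
        _ = Kmax := Nat.ceil_natCast Kmax
      have hn7 : 7 ≤ n := by
        by_contra h
        push_neg at h
        have hK : 3 * n + 1 ≤ Kmax := le_trans hceil hceilK
        interval_cases n <;> omega
      have hw21 : (21:ℝ) ≤ w := by
        have h8 : (⌈w⌉₊ : ℝ) < w + 1 := Nat.ceil_lt_add_one (by linarith)
        have h9 : ((3 * n + 1 : ℕ) : ℝ) ≤ (⌈w⌉₊ : ℝ) := by exact_mod_cast hceil
        have h10 : (7:ℝ) ≤ n := by exact_mod_cast hn7
        push_cast at h9
        linarith
      exact caseB ε hε0 hε1 n Kmax (2^n) Dn (4 * Kmax) rfl rfl hn7 hw21 hcard hD3 hD1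
  exact ⟨f, h1, part2_of_part1 ε hε0 hε1 Kmax (2^n) ⌈3 * (n : ℝ) / ε⌉₊ (4 * Kmax)
    hKmax1 rfl hD1 f h1⟩
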